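/- Let G be a finite simple graph with vertex set V and let k ≥ 1 and p ≥ 1 be integers. Let H be the simple graph whose vertex set is the disjoint union of V × {1,…,k} and {1,…,k} × {1,…,p−1}, in which two vertices (u,i) and (v,j) of V × {1,…,k} are adjacent if and only if i ≠ j and either u = v or u and v are adjacent in G, and all vertices of {1,…,k} × {1,…,p−1} are isolated. For each i ∈ {1,…,k} set Wᵢ := (V × {i}) ∪ ({i} × {1,…,p−1}). Then G has an independent set of cardinality k if and only if H has an independent set Ĩ with |Ĩ ∩ Wᵢ| = p for every i ∈ {1,…,k}. -/

import Mathlib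

/-- An independent set of a simple graph: no two of its vertices are adjacent. -/
def IsIndep {α : Type*} (G : SimpleGraph α) (I : Finset α) : Prop :=
  ∀ u ∈ I, ∀ v ∈ I, ¬ G.Adj u v

/-- The graph `H` on the disjoint union of `V × {1,…,k}` and `{1,…,k} × {1,…,p-1}`:
two vertices `(u,i)` and `(v,j)` of `V × {1,…,k}` are adjacent iff `i ≠ j` and either
`u = v` or `u` and `v` are adjacent in `G`; all vertices of `{1,…,k} × {1,…,p-1}`
are isolated. -/
def composedGraph {α : Type*} (G : SimpleGraph α) (k p : ℕ) :
    SimpleGraph ((α × Fin k) ⊕ (Fin k × Fin (p - 1))) where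
  Adj x y := ∃ u i v j, x = Sum.inl (u, i) ∧ y = Sum.inl (v, j) ∧
    i ≠ j ∧ (u = v ∨ G.Adj u v)
  symm := by
    constructor
    rintro x y ⟨u, i, v, j, rfl, rfl, hij, h⟩
    refine ⟨v, j, u, i, rfl, rfl, hij.symm, ?_⟩
    rcases h with h | h
    · exact Or.inl h.symm
    · exact Or.inr (G.symm.symm _ _ h)
  loopless := by
    constructor
    rintro x ⟨u, i, v, j, rfl, h, hij, _⟩
    obtain ⟨h1, h2⟩ := Prod.mk.injEq .. ▸ Sum.inl.inj h
    exact hij h2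

theorem reduction_IS_to_PISp {α : Type*} [Fintype α] [DecidableEq α]
    (G : SimpleGraph α) (k p : ℕ) (hk : 1 ≤ k) (hp : 1 ≤ p) :
    (∃ I : Finset α, IsIndep G I ∧ I.card = k) ↔
      (∃ J : Finset ((α × Fin k) ⊕ (Fin k × Fin (p - 1))),
        IsIndep (composedGraph G k p) J ∧
        ∀ i : Fin k,
          (J ∩ ((Finset.univ.image fun u : α => Sum.inl (u, i)) ∪
            (Finset.univ.image fun t : Fin (p - 1) => Sum.inr (i, t)))).card = p) := by
  constructor
  · rintro ⟨I, hI, hcard⟩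
    set e := I.equivFin with he
    set f : Fin k → α := fun i => (e.symm (Fin.cast hcard.symm i) : α) with hf
    have hfI : ∀ i, f i ∈ I := fun i => (e.symm _).2
    have hfinj : Function.Injective f := by
      intro i j h
      have h2 := e.symm.injective (Subtype.ext h)
      simpa [Fin.ext_iff] using congrArg Fin.val h2
    refine ⟨(Finset.univ.image fun i : Fin k => Sum.inl (f i, i)) ∪
      (Finset.univ.image Sum.inr), ?_, ?_⟩
    · rintro x hx y hy ⟨u, i, v, j, rfl, rfl, hij, h⟩
      simp only [Finset.mem_union, Finset.mem_image, Finset.mem_univ, true_and] at hx hy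
      rcases hx with ⟨a, ha⟩ | ⟨a, ha⟩
      · rcases hy with ⟨b, hb⟩ | ⟨b, hb⟩
        · obtain ⟨hfa, hai⟩ := Prod.mk.injEq .. ▸ Sum.inl.inj ha
          obtain ⟨hfb, hbj⟩ := Prod.mk.injEq .. ▸ Sum.inl.inj hb
          subst hai; subst hbj; subst hfa; subst hfb
          rcases h with h | h
          · exact hij (hfinj h)
          · exact hI _ (hfI a) _ (hfI b) h
        · exact absurd hb (by simp)
      · exact absurd ha (by simp)
    · intro i
      have hset : ((Finset.univ.image fun i : Fin k => Sum.inl (f i, i)) ∪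
          (Finset.univ.image Sum.inr)) ∩
          ((Finset.univ.image fun u : α => Sum.inl (u, i)) ∪
            (Finset.univ.image fun t : Fin (p - 1) => Sum.inr (i, t))) =
          insert (Sum.inl (f i, i))
            (Finset.univ.image fun t : Fin (p - 1) =>
              (Sum.inr (i, t) : (α × Fin k) ⊕ (Fin k × Fin (p - 1)))) := by
        ext x
        rcases x with ⟨u, j⟩ | ⟨j, t⟩ <;>
          simp only [Finset.mem_inter, Finset.mem_union, Finset.mem_image,
            Finset.mem_univ, true_and, Finset.mem_insert, Sum.inl.injEq, Sum.inr.injEq,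
            Prod.mk.injEq] <;> constructor
        · rintro ⟨⟨a, ha, rfl⟩ | ⟨a, ha⟩, ⟨b, hb, rfl⟩ | ⟨b, hb⟩⟩ <;>
            simp_all
        · rintro (⟨rfl, rfl⟩ | ⟨a, ha⟩)
          · exact ⟨Or.inl ⟨_, rfl, rfl⟩, Or.inl ⟨_, rfl, rfl⟩⟩
          · simp_all
        · rintro ⟨⟨a, ha⟩ | ⟨a, ha⟩, ⟨b, hb⟩ | ⟨b, hb, ht⟩⟩ <;> simp_all
        · rintro (h | ⟨a, rfl, rfl⟩)
          · simp_all
          · exact ⟨Or.inr ⟨(i, a), rfl⟩, Or.inr ⟨a, rfl, rfl⟩⟩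
      rw [hset, Finset.card_insert_of_notMem (by simp), Finset.card_image_of_injective _
        (by intro a b hab; simpa using hab)]
      simp [Nat.sub_add_cancel hp]
  · rintro ⟨J, hJ, hcount⟩
    have hex : ∀ i : Fin k, ∃ u : α, Sum.inl (u, i) ∈ J := by
      intro i
      by_contra hno
      push_neg at hno
      have hsub : J ∩ ((Finset.univ.image fun u : α => Sum.inl (u, i)) ∪
          (Finset.univ.image fun t : Fin (p - 1) => Sum.inr (i, t))) ⊆
          (Finset.univ.image fun t : Fin (p - 1) =>
            (Sum.inr (i, t) : (α × Fin k) ⊕ (Fin k × Fin (p - 1)))) := by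
        intro x hx
        simp only [Finset.mem_inter, Finset.mem_union, Finset.mem_image,
          Finset.mem_univ, true_and] at hx ⊢
        rcases hx with ⟨hxJ, ⟨u, hu⟩ | h⟩
        · subst hu; exact absurd hxJ (hno u)
        · exact h
      have hle := Finset.card_le_card hsub
      rw [hcount i] at hle
      have : (Finset.univ.image fun t : Fin (p - 1) =>
          (Sum.inr (i, t) : (α × Fin k) ⊕ (Fin k × Fin (p - 1)))).card ≤ p - 1 := by
        calc _ ≤ (Finset.univ : Finset (Fin (p-1))).card := Finset.card_image_le
        _ = p - 1 := by simp
      omega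
    choose g hg using hex
    have hginj : Function.Injective g := by
      intro i j h
      by_contra hij
      exact hJ _ (hg i) _ (hg j) ⟨g i, i, g j, j, rfl, rfl, hij, Or.inl h⟩
    refine ⟨Finset.univ.image g, ?_, ?_⟩
    · intro u hu v hv huv
      simp only [Finset.mem_image, Finset.mem_univ, true_and] at hu hv
      obtain ⟨i, rfl⟩ := hu
      obtain ⟨j, rfl⟩ := hv
      have hij : i ≠ j := by rintro rfl; exact G.loopless.irrefl _ huv
      exact hJ _ (hg i) _ (hg j) ⟨g i, i, g j, j, rfl, rfl, hij, Or.inr huv⟩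
    · rw [Finset.card_image_of_injective _ hginj]; simp
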